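/- Let A(x, y) = Σ_{s,t} a_{s,t} x^s y^t be a polynomial with integer coefficients, and for integers k ≥ 0 and i ≥ 0 define A_{k,i} := Σ_{s=0}^{k} Σ_{t=0}^{k−s} (−1)^{t+i} · C(k−s, t) · a_{s,t+i}, where C(m, t) denotes the binomial coefficient. If k > deg_x(A) (the maximum s such that a_{s,t} ≠ 0 for some t) and i > 0, then A_{k−1,i} = A_{k,i−1} − A_{k−1,i−1}. -/
import Mathlib


/-- For a bivariate integer polynomial `A` (in the variables `x = X 0`, `y = X 1`)
with coefficients `a_{s,t}`, the quantity
`A_{k,i} = Σ_{s=0}^{k} Σ_{t=0}^{k-s} (−1)^(t+i) C(k−s, t) a_{s,t+i}`. -/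
noncomputable def Asum (A : MvPolynomial (Fin 2) ℤ) (k i : ℕ) : ℤ :=
  ∑ s ∈ Finset.range (k + 1), ∑ t ∈ Finset.range (k - s + 1),
    (-1 : ℤ) ^ (t + i) * (Nat.choose (k - s) t : ℤ) *
      MvPolynomial.coeff (Finsupp.single 0 s + Finsupp.single 1 (t + i)) A

lemma inner_pascal (a : ℕ → ℤ) (M j : ℕ) :
    ∑ t ∈ Finset.range (M + 2), (-1:ℤ)^(t+j) * ((M+1).choose t : ℤ) * a (t+j)
      = (∑ t ∈ Finset.range (M + 1), (-1:ℤ)^(t+j) * (M.choose t : ℤ) * a (t+j))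
        + ∑ t ∈ Finset.range (M + 1), (-1:ℤ)^(t+(j+1)) * (M.choose t : ℤ) * a (t+(j+1)) := by
  rw [Finset.sum_range_succ' _ (M+1)]
  have hsplit : ∀ t ∈ Finset.range (M+1),
      (-1:ℤ)^(t+1+j) * (((M+1).choose (t+1) : ℕ) : ℤ) * a (t+1+j)
        = (-1:ℤ)^(t+1+j) * (M.choose t : ℤ) * a (t+1+j)
          + (-1:ℤ)^(t+1+j) * (M.choose (t+1) : ℤ) * a (t+1+j) := by
    intro t _
    rw [Nat.choose_succ_succ]
    push_cast
    ring
  rw [Finset.sum_congr rfl hsplit, Finset.sum_add_distrib]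
  have h1 : ∑ t ∈ Finset.range (M+1), (-1:ℤ)^(t+1+j) * (M.choose t : ℤ) * a (t+1+j)
      = ∑ t ∈ Finset.range (M + 1), (-1:ℤ)^(t+(j+1)) * (M.choose t : ℤ) * a (t+(j+1)) := by
    apply Finset.sum_congr rfl; intro t _
    have : t + 1 + j = t + (j + 1) := by omega
    rw [this]
  have h2 : (∑ t ∈ Finset.range (M+1), (-1:ℤ)^(t+1+j) * (M.choose (t+1) : ℤ) * a (t+1+j))
        + (-1:ℤ)^(0+j) * (((M+1).choose 0 : ℕ) : ℤ) * a (0+j)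
      = ∑ t ∈ Finset.range (M + 1), (-1:ℤ)^(t+j) * (M.choose t : ℤ) * a (t+j) := by
    rw [Finset.sum_range_succ _ M, Nat.choose_succ_self,
      Finset.sum_range_succ' (fun t => (-1:ℤ)^(t+j) * ((M.choose t : ℕ) : ℤ) * a (t+j)) M]
    simp
  linarith [h1, h2]

/-- **Statement 18.** If `k > deg_x(A)` and `i > 0`, then
`A_{k−1,i} = A_{k,i−1} − A_{k−1,i−1}`. -/
theorem Asum_recurrence (A : MvPolynomial (Fin 2) ℤ) (k i : ℕ)
    (hk : MvPolynomial.degreeOf 0 A < k) (hi : 0 < i) :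
    Asum A (k - 1) i = Asum A k (i - 1) - Asum A (k - 1) (i - 1) := by
  obtain ⟨m, rfl⟩ : ∃ m, k = m + 1 := ⟨k - 1, by omega⟩
  obtain ⟨j, rfl⟩ : ∃ j, i = j + 1 := ⟨i - 1, by omega⟩
  simp only [Nat.add_sub_cancel]
  -- top coefficient vanishes
  have htop : ∀ u : ℕ,
      MvPolynomial.coeff (Finsupp.single 0 (m+1) + Finsupp.single 1 u) A = 0 := by
    intro u
    by_contra h
    have hmem := MvPolynomial.mem_support_iff.mpr h
    have := (MvPolynomial.degreeOf_lt_iff (by omega : 0 < m + 1)).mp hk _ hmem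
    simp [Finsupp.single_apply] at this
  have key : Asum A (m+1) j = Asum A m j + Asum A m (j+1) := by
    unfold Asum
    rw [Finset.sum_range_succ]
    have hlast : ∑ t ∈ Finset.range (m + 1 - (m+1) + 1),
        (-1 : ℤ) ^ (t + j) * ((m + 1 - (m+1)).choose t : ℤ) *
          MvPolynomial.coeff (Finsupp.single 0 (m+1) + Finsupp.single 1 (t + j)) A = 0 := by
      have h0 : m + 1 - (m+1) + 1 = 1 := by omega
      rw [h0, Finset.sum_range_one, htop, mul_zero]
    rw [hlast, add_zero]
    rw [← Finset.sum_add_distrib]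
    apply Finset.sum_congr rfl
    intro s hs
    have hsm : s ≤ m := by simpa [Nat.lt_succ_iff] using hs
    have h1 : m + 1 - s = (m - s) + 1 := by omega
    rw [h1]
    exact inner_pascal (fun u => MvPolynomial.coeff (Finsupp.single 0 s + Finsupp.single 1 u) A) (m - s) j
  linarith [key]
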